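/- Let ω : [0,1) → [0,∞) be integrable with strictly positive tail integral ω̂. Then the following are equivalent: (i) there exist K > 1 and C > 1 such that ω̂(r) ≥ C ω̂(1 − (1−r)/K) for all r ∈ [0,1); (ii) there exist C > 0 and α > 0 such that ω̂(s) ≤ C ((1−s)/(1−t))^α ω̂(t) for all 0 ≤ t ≤ s < 1. -/

import Mathlib

open MeasureTheory Set
open scoped ENNReal NNReal

theorem stmt5 (ω : ℝ → ℝ) (hnn : ∀ r, 0 ≤ ω r) (hint : IntegrableOn ω (Set.Ico 0 1))
    (hpos : ∀ r ∈ Set.Ico (0 : ℝ) 1, 0 < ∫ s in r..1, ω s) :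
    (∃ K > (1 : ℝ), ∃ C > (1 : ℝ), ∀ r ∈ Set.Ico (0 : ℝ) 1,
        C * (∫ s in (1 - (1 - r) / K)..1, ω s) ≤ ∫ s in r..1, ω s) ↔
    (∃ C > (0 : ℝ), ∃ α > (0 : ℝ), ∀ t s : ℝ, 0 ≤ t → t ≤ s → s < 1 →
        (∫ u in s..1, ω u) ≤ C * ((1 - s) / (1 - t)) ^ α * ∫ u in t..1, ω u) := by
  set W : ℝ → ℝ := fun r => ∫ s in r..1, ω s with hW
  have hIcc : IntegrableOn ω (Icc 0 1) := hint.congr_set_ae Ico_ae_eq_Icc.symm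
  have hI : ∀ a b : ℝ, 0 ≤ a → a ≤ b → b ≤ 1 → IntervalIntegrable ω volume a b := by
    intro a b ha hab hb
    rw [intervalIntegrable_iff]
    refine hIcc.mono_set ?_
    rw [uIoc_of_le hab]
    exact fun x hx => ⟨le_trans ha (le_of_lt hx.1), le_trans hx.2 hb⟩
  have hmono : ∀ t s : ℝ, 0 ≤ t → t ≤ s → s ≤ 1 → W s ≤ W t := by
    intro t s ht hts hs
    have h1 := intervalIntegral.integral_add_adjacent_intervals
      (hI t s ht hts hs) (hI s 1 (le_trans ht hts) hs le_rfl)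
    have h2 : 0 ≤ ∫ u in t..s, ω u :=
      intervalIntegral.integral_nonneg hts (fun u _ => hnn u)
    simp only [hW] at *
    linarith
  have hWnn : ∀ r : ℝ, 0 ≤ r → r ≤ 1 → 0 ≤ W r := fun r h0 h1 =>
    intervalIntegral.integral_nonneg h1 (fun u _ => hnn u)
  constructor
  · rintro ⟨K, hK, C, hC, h⟩
    have hK0 : (0 : ℝ) < K := by linarith
    have hC0 : (0 : ℝ) < C := by linarith
    refine ⟨C, hC0, Real.logb K C, Real.logb_pos hK hC, ?_⟩
    intro t s ht hts hs
    set α := Real.logb K C with hα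
    have ht1 : t < 1 := lt_of_le_of_lt hts hs
    have hWt : 0 < W t := hpos t ⟨ht, ht1⟩
    -- iteration
    have key : ∀ n : ℕ, C ^ n * W (1 - (1 - t) / K ^ n) ≤ W t := by
      intro n
      induction n with
      | zero => simp
      | succ n ih =>
        set r := 1 - (1 - t) / K ^ n with hr
        have hKn : (1 : ℝ) ≤ K ^ n := one_le_pow₀ hK.le
        have hKnp : (0 : ℝ) < K ^ n := by linarith
        have hdle : (1 - t) / K ^ n ≤ 1 - t := by
          rw [div_le_iff₀ hKnp]
          nlinarith
        have hr0 : 0 ≤ r := by simp only [hr]; linarith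
        have hr1 : r < 1 := by
          simp only [hr]
          have : 0 < (1 - t) / K ^ n := div_pos (by linarith) hKnp
          linarith
        have hstep := h r ⟨hr0, hr1⟩
        have hre : 1 - (1 - r) / K = 1 - (1 - t) / K ^ (n + 1) := by
          simp only [hr]
          rw [pow_succ]
          field_simp
          ring
        rw [hre] at hstep
        calc C ^ (n + 1) * W (1 - (1 - t) / K ^ (n + 1))
            = C ^ n * (C * W (1 - (1 - t) / K ^ (n + 1))) := by ring
          _ ≤ C ^ n * W r := by
              exact mul_le_mul_of_nonneg_left hstep (by positivity)
          _ ≤ W t := ih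
    -- choose n
    set x := (1 - t) / (1 - s) with hx
    have hs1 : (0 : ℝ) < 1 - s := by linarith
    have ht1' : (0 : ℝ) < 1 - t := by linarith
    have hx1 : 1 ≤ x := by
      rw [hx, le_div_iff₀ hs1]; linarith
    have hx0 : 0 < x := by linarith
    set n := Nat.floor (Real.logb K x) with hn
    have hlb : 0 ≤ Real.logb K x := Real.logb_nonneg hK hx1
    have h1 : (K : ℝ) ^ n ≤ x := by
      have := Real.rpow_le_rpow_of_exponent_le hK.le (Nat.floor_le hlb)
      rwa [Real.rpow_logb hK0 (ne_of_gt hK) hx0, Real.rpow_natCast] at this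
    have h2 : x < K ^ (n + 1) := by
      have h3 : Real.logb K x < (n : ℝ) + 1 := Nat.lt_floor_add_one _
      have := Real.rpow_lt_rpow_of_exponent_lt hK h3
      rw [Real.rpow_logb hK0 (ne_of_gt hK) hx0] at this
      calc x < K ^ ((n : ℝ) + 1) := this
        _ = K ^ (n + 1) := by
            rw [show ((n : ℝ) + 1) = ((n + 1 : ℕ) : ℝ) by push_cast; ring,
              Real.rpow_natCast]
    have hKnp : (0 : ℝ) < K ^ n := pow_pos hK0 n
    -- s ≥ r_n
    have hrn : 1 - (1 - t) / K ^ n ≤ s := by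
      have : 1 - s ≤ (1 - t) / K ^ n := by
        rw [le_div_iff₀ hKnp]
        calc (1 - s) * K ^ n = K ^ n * (1 - s) := by ring
          _ ≤ 1 - t := by
              rw [hx, le_div_iff₀ hs1] at h1
              linarith
      linarith
    have hrn0 : 0 ≤ 1 - (1 - t) / K ^ n := by
      have hKn1 : (1 : ℝ) ≤ K ^ n := one_le_pow₀ hK.le
      have : (1 - t) / K ^ n ≤ 1 - t := by
        rw [div_le_iff₀ hKnp]; nlinarith
      linarith
    have hkey : C ^ n * W s ≤ W t := by
      calc C ^ n * W s ≤ C ^ n * W (1 - (1 - t) / K ^ n) := by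
            exact mul_le_mul_of_nonneg_left (hmono _ _ hrn0 hrn hs.le) (by positivity)
        _ ≤ W t := key n
    -- exponent bound
    set y := ((1 - s) / (1 - t)) ^ α with hy
    have hyx : y = (x ^ α)⁻¹ := by
      rw [hy, show (1 - s) / (1 - t) = x⁻¹ by rw [hx, inv_div],
        Real.inv_rpow hx0.le]
    have hα0 : 0 ≤ α := (Real.logb_pos hK hC).le
    have hxa : x ^ α ≤ C ^ (n + 1) := by
      calc x ^ α ≤ (K ^ (n + 1) : ℝ) ^ α := Real.rpow_le_rpow hx0.le h2.le hα0
        _ = C ^ (n + 1) := by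
            rw [← Real.rpow_natCast K (n + 1), ← Real.rpow_natCast C (n + 1),
              ← Real.rpow_mul hK0.le, mul_comm, Real.rpow_mul hK0.le,
              hα, Real.rpow_logb hK0 (ne_of_gt hK) hC0]
    have hxap : 0 < x ^ α := Real.rpow_pos_of_pos hx0 α
    have hy1 : 1 ≤ C ^ (n + 1) * y := by
      rw [hyx, ← div_eq_mul_inv, le_div_iff₀ hxap]
      linarith
    have hy0 : 0 ≤ y := by rw [hyx]; positivity
    have hWs : 0 ≤ W s := hWnn s (le_trans ht hts) hs.le
    show W s ≤ C * y * W t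
    nlinarith [mul_le_mul_of_nonneg_left hkey (mul_nonneg hC0.le hy0),
      mul_le_mul_of_nonneg_right hy1 hWs, pow_succ C n]
  · rintro ⟨C, hC, α, hα, h⟩
    set K := max 2 ((2 * C) ^ α⁻¹) with hKdef
    have hK2 : (2 : ℝ) ≤ K := le_max_left _ _
    have hK1 : (1 : ℝ) < K := by linarith
    have hK0 : (0 : ℝ) < K := by linarith
    refine ⟨K, hK1, 2, one_lt_two, ?_⟩
    rintro r ⟨hr0, hr1⟩
    set s := 1 - (1 - r) / K with hs
    have hr1' : (0 : ℝ) < 1 - r := by linarith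
    have hdiv : 0 < (1 - r) / K := div_pos hr1' hK0
    have hdle : (1 - r) / K < 1 - r := by
      rw [div_lt_iff₀ hK0]; nlinarith
    have hrs : r ≤ s := by simp only [hs]; linarith
    have hs1 : s < 1 := by simp only [hs]; linarith
    have hh := h r s hr0 hrs hs1
    have hq : (1 - s) / (1 - r) = K⁻¹ := by
      rw [hs]
      field_simp
      ring
    rw [hq] at hh
    have h2C : (0 : ℝ) < 2 * C := by linarith
    have hKa : 2 * C ≤ K ^ α := by
      calc 2 * C = ((2 * C) ^ α⁻¹ : ℝ) ^ α := by
            rw [← Real.rpow_mul h2C.le, inv_mul_cancel₀ (ne_of_gt hα), Real.rpow_one]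
        _ ≤ K ^ α := Real.rpow_le_rpow (Real.rpow_nonneg (by linarith) _)
            (le_max_right _ _) hα.le
    have hinv : C * (K⁻¹ : ℝ) ^ α ≤ 1 / 2 := by
      rw [Real.inv_rpow hK0.le]
      have hKap : 0 < K ^ α := Real.rpow_pos_of_pos hK0 α
      nlinarith [mul_le_mul_of_nonneg_right hKa (inv_nonneg.mpr hKap.le),
        mul_inv_cancel₀ (ne_of_gt hKap)]
    have hWr : 0 < W r := hpos r ⟨hr0, hr1⟩
    have hWs : 0 ≤ W s := hWnn s (le_trans hr0 hrs) hs1.le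
    show 2 * W s ≤ W r
    have hKap : 0 ≤ (K⁻¹ : ℝ) ^ α := Real.rpow_nonneg (by positivity) α
    nlinarith [hh, hinv, hWr.le]
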